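/- Let B have tail P(B > x) ~ ℓ(x) x^{-κ} with ℓ slowly varying and κ > 0, and let M ≥ 0 be independent of B with E[M^{κ+δ}] < ∞ for some δ > 0. Then P(M B > x) ~ E[M^κ] P(B > x) as x → ∞ (Breiman's lemma). -/

import Mathlib

open MeasureTheory ProbabilityTheory Filter
open scoped ProbabilityTheory Topology

/-- `ℓ` is slowly varying at infinity. -/
def SlowlyVarying (ℓ : ℝ → ℝ) : Prop :=
  ∀ t > (0 : ℝ), Tendsto (fun x => ℓ (t * x) / ℓ x) atTop (𝓝 1)

/-- Dyadic chaining bound for an antitone nonnegative function with a doubling estimate. -/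
lemma breiman_chain_bound {F : ℝ → ℝ} (hF : Antitone F) (hFnn : ∀ x, 0 ≤ F x)
    {x1 C2 : ℝ} (hx1 : 1 ≤ x1) (hC2 : 1 ≤ C2)
    (hstep : ∀ x, x1 ≤ x → F (x / 2) ≤ C2 * F x) :
    ∀ n : ℕ, ∀ m x : ℝ, 1 ≤ m → m ≤ 2 ^ n → x1 * m ≤ x → F (x / m) ≤ C2 ^ n * F x := by
  intro n
  induction n with
  | zero =>
      intro m x hm1 hm2 hx
      simp only [pow_zero] at hm2 ⊢
      have hm : m = 1 := le_antisymm hm2 hm1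
      subst hm
      simp
  | succ n ih =>
      intro m x hm1 hm2 hx
      have hC2n : (0:ℝ) ≤ C2 ^ n := pow_nonneg (by linarith) n
      have hxpos : 0 < x := lt_of_lt_of_le (by nlinarith) hx
      by_cases h : m ≤ 2 ^ n
      · refine (ih m x hm1 h hx).trans ?_
        have : C2 ^ n ≤ C2 ^ (n + 1) := pow_le_pow_right₀ (by linarith) (by omega)
        nlinarith [hFnn x]
      · push_neg at h
        have hx1x : x1 ≤ x := by nlinarith
        by_cases h2 : m ≤ 2
        · have hstep' := hstep x hx1x
          have hle : F (x / m) ≤ F (x / 2) := by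
            apply hF
            apply div_le_div_of_nonneg_left hxpos.le (by linarith) h2
          have : C2 ≤ C2 ^ (n + 1) := by
            calc C2 = C2 ^ 1 := (pow_one C2).symm
            _ ≤ C2 ^ (n+1) := pow_le_pow_right₀ (by linarith) (by omega)
          nlinarith [hFnn x]
        · push_neg at h2
          have hm0 : (0:ℝ) < m := by linarith
          have key : F ((x / 2) / (m / 2)) ≤ C2 ^ n * F (x / 2) := by
            apply ih (m / 2) (x / 2) (by linarith) (by rw [pow_succ] at hm2; linarith)
              (by linarith)
          have heq : (x / 2) / (m / 2) = x / m := by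
            field_simp
          rw [heq] at key
          have hstep' := hstep x hx1x
          calc F (x / m) ≤ C2 ^ n * F (x / 2) := key
            _ ≤ C2 ^ n * (C2 * F x) := by nlinarith
            _ = C2 ^ (n+1) * F x := by ring

/-- Potter-type bound. -/
lemma breiman_potter {F : ℝ → ℝ} (hFnn : ∀ x, 0 ≤ F x)
    {x1 p : ℝ} (hp : 0 < p)
    (chain : ∀ n : ℕ, ∀ m x : ℝ, 1 ≤ m → m ≤ 2 ^ n → x1 * m ≤ x →
      F (x / m) ≤ ((2:ℝ) ^ p) ^ n * F x) :
    ∀ m x : ℝ, 1 ≤ m → x1 * m ≤ x → F (x / m) ≤ (2 * m) ^ p * F x := by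
  intro m x hm1 hx
  have hm0 : (0:ℝ) < m := by linarith
  set L := Real.logb 2 m with hL
  have hL0 : 0 ≤ L := Real.logb_nonneg (by norm_num) hm1
  set n := ⌈L⌉₊ with hn
  have hmn : m ≤ 2 ^ n := by
    have h1 : m = (2:ℝ) ^ L := (Real.rpow_logb (by norm_num) (by norm_num) hm0).symm
    have h2 : (2:ℝ) ^ L ≤ (2:ℝ) ^ (n:ℝ) :=
      Real.rpow_le_rpow_of_exponent_le (by norm_num) (Nat.le_ceil L)
    rw [Real.rpow_natCast] at h2
    linarith [h1 ▸ h2]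
  have hkey := chain n m x hm1 hmn hx
  have hCn : ((2:ℝ) ^ p) ^ n ≤ (2 * m) ^ p := by
    have e1 : ((2:ℝ) ^ p) ^ n = (2:ℝ) ^ (p * n) := by
      rw [Real.rpow_mul (by norm_num : (0:ℝ) ≤ 2), Real.rpow_natCast]
    have hnle : (n:ℝ) ≤ L + 1 := le_of_lt (Nat.ceil_lt_add_one hL0)
    have e2 : (2:ℝ) ^ (p * n) ≤ (2:ℝ) ^ (p * (L + 1)) := by
      apply Real.rpow_le_rpow_of_exponent_le (by norm_num)
      nlinarith
    have e3 : (2:ℝ) ^ (p * (L + 1)) = (2 * m) ^ p := by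
      rw [mul_comm p (L+1), Real.rpow_mul (by norm_num : (0:ℝ) ≤ 2)]
      congr 1
      rw [Real.rpow_add (by norm_num : (0:ℝ) < 2), Real.rpow_logb (by norm_num) (by norm_num) hm0,
        Real.rpow_one]
      ring
    calc ((2:ℝ) ^ p) ^ n = (2:ℝ) ^ (p * n) := e1
      _ ≤ (2:ℝ) ^ (p * (L + 1)) := e2
      _ = (2 * m) ^ p := e3
  nlinarith [hFnn x]

lemma breiman_arith {c q v : ℝ} (hc : 0 < c) (hq : 0 ≤ q) (hv : 0 ≤ v) :
    c * v ≤ (c + q + 1) * (1 + v) ∧ q * v ≤ (c + q + 1) * (1 + v) ∧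
      1 ≤ (c + q + 1) * (1 + v) := by
  refine ⟨by nlinarith, by nlinarith, by nlinarith⟩

set_option maxHeartbeats 1000000 in
theorem stmt5 {Ω : Type*} [MeasureSpace Ω] [IsProbabilityMeasure (ℙ : Measure Ω)]
    (B M : Ω → ℝ) (hBmeas : Measurable B) (hMmeas : Measurable M)
    (hBnn : ∀ ω, 0 ≤ B ω) (hMnn : ∀ ω, 0 ≤ M ω)
    (ℓ : ℝ → ℝ) (κ δ : ℝ) (hκ : 0 < κ) (hδ : 0 < δ) (hℓ : SlowlyVarying ℓ)
    (htail : Tendsto (fun x => (ℙ {ω | x < B ω}).toReal / (ℓ x * x ^ (-κ)))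
      atTop (𝓝 1))
    (hind : IndepFun M B)
    (hmom : Integrable (fun ω => M ω ^ (κ + δ))) :
    Tendsto (fun x => (ℙ {ω | x < M ω * B ω}).toReal / (ℙ {ω | x < B ω}).toReal)
      atTop (𝓝 (∫ ω, M ω ^ κ)) := by
  classical
  set Fb : ℝ → ℝ := fun x => (ℙ {ω | x < B ω}).toReal with hFbdef
  have hFb_nn : ∀ x, 0 ≤ Fb x := fun x => ENNReal.toReal_nonneg
  have hFb_le_one : ∀ x, Fb x ≤ 1 := by
    intro x
    have h := prob_le_one (μ := (ℙ : Measure Ω)) (s := {ω | x < B ω})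
    simpa using ENNReal.toReal_mono ENNReal.one_ne_top h
  have hFb_anti : Antitone Fb := by
    intro a b hab
    apply ENNReal.toReal_mono (measure_ne_top _ _)
    apply measure_mono
    intro ω hω
    exact lt_of_le_of_lt hab hω
  -- eventual positivity
  have hpos : ∀ᶠ x in atTop, 0 < Fb x ∧ 0 < ℓ x * x ^ (-κ) := by
    have h2 : ∀ᶠ x in atTop, (1:ℝ)/2 < Fb x / (ℓ x * x ^ (-κ)) :=
      htail.eventually_const_lt (by norm_num)
    filter_upwards [h2] with x hx
    have hd : ℓ x * x ^ (-κ) ≠ 0 := by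
      intro h
      rw [h, div_zero] at hx
      linarith
    have hFne : Fb x ≠ 0 := by
      intro h
      rw [h, zero_div] at hx
      linarith
    have hFpos : 0 < Fb x := lt_of_le_of_ne (hFb_nn x) (Ne.symm hFne)
    have hdpos : 0 < ℓ x * x ^ (-κ) := by
      rcases hd.lt_or_gt with h | h
      · exfalso
        have : Fb x / (ℓ x * x ^ (-κ)) < 0 := div_neg_of_pos_of_neg hFpos h
        linarith
      · exact h
    exact ⟨hFpos, hdpos⟩
  -- regular variation of the tail
  have hA : ∀ t : ℝ, 0 < t → Tendsto (fun x => Fb (t * x) / Fb x) atTop (𝓝 (t ^ (-κ))) := by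
    intro t ht
    have htx : Tendsto (fun x : ℝ => t * x) atTop atTop := tendsto_id.const_mul_atTop ht
    have h1 : Tendsto (fun x => Fb (t*x) / (ℓ (t*x) * (t*x) ^ (-κ))) atTop (𝓝 1) :=
      htail.comp htx
    have h2 := hℓ t ht
    have h3 : Tendsto (fun x => (ℓ x * x ^ (-κ)) / Fb x) atTop (𝓝 1) := by
      have h := (htail.inv₀ one_ne_zero)
      simp only [inv_one] at h
      apply h.congr
      intro x
      rw [inv_div]
    have hprod : Tendsto (fun x => (Fb (t*x) / (ℓ (t*x) * (t*x) ^ (-κ))) * (ℓ (t*x) / ℓ x)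
        * ((ℓ x * x ^ (-κ)) / Fb x) * t ^ (-κ)) atTop (𝓝 (t ^ (-κ))) := by
      have := ((h1.mul h2).mul h3).mul_const (t ^ (-κ))
      simpa using this
    apply Filter.Tendsto.congr' ?_ hprod
    filter_upwards [hpos, htx.eventually hpos, eventually_gt_atTop 0] with x hx htxx hx0
    obtain ⟨hFx, hdx⟩ := hx
    obtain ⟨hFtx, hdtx⟩ := htxx
    have hxk : 0 < x ^ (-κ) := Real.rpow_pos_of_pos hx0 _
    have htxk : 0 < (t*x) ^ (-κ) := Real.rpow_pos_of_pos (mul_pos ht hx0) _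
    have hlx : ℓ x ≠ 0 := by
      intro h; rw [h, zero_mul] at hdx; exact lt_irrefl _ hdx
    have hltx : ℓ (t*x) ≠ 0 := by
      intro h; rw [h, zero_mul] at hdtx; exact lt_irrefl _ hdtx
    have hmul : (t*x) ^ (-κ) = t ^ (-κ) * x ^ (-κ) := Real.mul_rpow ht.le hx0.le
    rw [hmul]
    field_simp

  -- doubling constant
  obtain ⟨p, hpdef⟩ : ∃ p : ℝ, p = κ + δ/2 := ⟨_, rfl⟩
  have hp : 0 < p := by rw [hpdef]; linarith
  have hC2one : (1:ℝ) ≤ 2 ^ p := by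
    have : (2:ℝ) ^ (0:ℝ) ≤ 2 ^ p := Real.rpow_le_rpow_of_exponent_le one_le_two hp.le
    simpa using this
  have hC2pos : (0:ℝ) < 2 ^ p := by positivity
  have hhalfval : ((1:ℝ)/2) ^ (-κ) = 2 ^ κ := by
    rw [one_div, Real.inv_rpow (by norm_num : (0:ℝ) ≤ 2), Real.rpow_neg (by norm_num : (0:ℝ) ≤ 2),
      inv_inv]
  have hlt : ((1:ℝ)/2) ^ (-κ) < 2 ^ p := by
    rw [hhalfval]
    exact Real.rpow_lt_rpow_of_exponent_lt one_lt_two (by rw [hpdef]; linarith)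
  have hdoubling : ∀ᶠ x in atTop, Fb (x/2) ≤ 2 ^ p * Fb x := by
    have hev := (hA (1/2) (by norm_num)).eventually_lt_const hlt
    filter_upwards [hev, hpos] with x hx hxp
    have h1 : Fb ((1/2) * x) < 2 ^ p * Fb x := (div_lt_iff₀ hxp.1).mp hx
    have h2 : x / 2 = (1/2) * x := by ring
    rw [h2]
    linarith
  obtain ⟨a, ha⟩ := eventually_atTop.mp (hdoubling.and hpos)
  set x1 : ℝ := max a 1 with hx1def
  have hx1ge1 : (1:ℝ) ≤ x1 := le_max_right a 1
  have hx1pos : (0:ℝ) < x1 := lt_of_lt_of_le one_pos hx1ge1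
  have hx1prop : ∀ x, x1 ≤ x → Fb (x/2) ≤ 2 ^ p * Fb x ∧ 0 < Fb x := by
    intro x hx
    have := ha x (le_trans (le_max_left a 1) hx)
    exact ⟨this.1, this.2.1⟩
  have hchain := breiman_chain_bound hFb_anti hFb_nn hx1ge1 hC2one
    (fun x hx => (hx1prop x hx).1)
  have hPotter : ∀ m x : ℝ, 1 ≤ m → x1 * m ≤ x → Fb (x/m) ≤ (2*m) ^ p * Fb x :=
    breiman_potter hFb_nn hp hchain
  -- lower bound on the tail
  have hFbx1pos : 0 < Fb x1 := (hx1prop x1 le_rfl).2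
  have hE : ∀ᶠ x in atTop, 1 ≤ x ^ (κ+δ) * Fb x := by
    have hcpos : 0 < Fb x1 * (x1/2) ^ p := mul_pos hFbx1pos (Real.rpow_pos_of_pos (by linarith) p)
    have hinf : Tendsto (fun x : ℝ => (Fb x1 * (x1/2) ^ p) * x ^ (δ/2)) atTop atTop :=
      (tendsto_rpow_atTop (by linarith : 0 < δ/2)).const_mul_atTop hcpos
    filter_upwards [hinf.eventually_ge_atTop 1, eventually_ge_atTop x1,
      eventually_ge_atTop 1] with x h1 hxx1 hx1le
    have hx0 : (0:ℝ) < x := lt_of_lt_of_le one_pos hx1le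
    have hm1 : 1 ≤ x / x1 := (one_le_div hx1pos).mpr hxx1
    have happ := hPotter (x/x1) x hm1 (by field_simp; exact le_rfl)
    have hxx : x / (x/x1) = x1 := by
      field_simp
    rw [hxx] at happ
    -- happ : Fb x1 ≤ (2*(x/x1))^p * Fb x
    have hxp : (0:ℝ) < x ^ p := Real.rpow_pos_of_pos hx0 _
    have hx1p : (0:ℝ) < x1 ^ p := Real.rpow_pos_of_pos hx1pos _
    have hxd : (0:ℝ) < x ^ (δ/2) := Real.rpow_pos_of_pos hx0 _
    have e1 : (2*(x/x1)) ^ p = 2 ^ p * (x ^ p / x1 ^ p) := by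
      rw [Real.mul_rpow (by norm_num) (by positivity), Real.div_rpow hx0.le hx1pos.le]
    have e2 : (x1/2) ^ p = x1 ^ p / 2 ^ p := Real.div_rpow hx1pos.le (by norm_num : (0:ℝ) ≤ 2) p
    have e3 : x ^ (κ+δ) = x ^ p * x ^ (δ/2) := by
      rw [← Real.rpow_add hx0]
      congr 1
      rw [hpdef]; ring
    rw [e1] at happ
    rw [e2] at h1
    rw [e3]
    -- goal : 1 ≤ x^p * x^(δ/2) * Fb x
    have hFbx : 0 ≤ Fb x := hFb_nn x
    have key : Fb x1 * x1 ^ p ≤ 2 ^ p * x ^ p * Fb x := by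
      have := mul_le_mul_of_nonneg_right happ hx1p.le
      calc Fb x1 * x1 ^ p ≤ 2 ^ p * (x ^ p / x1 ^ p) * Fb x * x1 ^ p := this
        _ = 2 ^ p * x ^ p * Fb x := by field_simp
    have key2 : Fb x1 * (x1 ^ p / 2 ^ p) ≤ x ^ p * Fb x := by
      rw [show Fb x1 * (x1 ^ p / 2 ^ p) = (Fb x1 * x1 ^ p) / 2 ^ p by ring,
        div_le_iff₀ hC2pos]
      nlinarith [key]
    calc (1:ℝ) ≤ Fb x1 * (x1 ^ p / 2 ^ p) * x ^ (δ/2) := h1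
      _ ≤ (x ^ p * Fb x) * x ^ (δ/2) := mul_le_mul_of_nonneg_right key2 hxd.le
      _ = x ^ p * x ^ (δ/2) * Fb x := by ring

  -- independence decomposition
  haveI hPB : IsProbabilityMeasure (Measure.map B ℙ) :=
    Measure.isProbabilityMeasure_map hBmeas.aemeasurable
  haveI hPM : IsProbabilityMeasure (Measure.map M ℙ) :=
    Measure.isProbabilityMeasure_map hMmeas.aemeasurable
  have hs : ∀ x : ℝ, MeasurableSet {q : ℝ × ℝ | x < q.1 * q.2} := fun x =>
    measurableSet_lt measurable_const (measurable_fst.mul measurable_snd)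
  set G : ℝ → ℝ → ℝ := fun x m => (Measure.map B ℙ {b | x < m * b}).toReal with hGdef
  have hsm : ∀ x m : ℝ, MeasurableSet {b : ℝ | x < m * b} := fun x m =>
    measurableSet_lt measurable_const (measurable_const.mul measurable_id)
  have hφmeas : ∀ x : ℝ, Measurable (fun m : ℝ => Measure.map B ℙ {b | x < m * b}) := by
    intro x
    exact measurable_measure_prodMk_left (hs x)
  have hGmeas : ∀ x : ℝ, Measurable (G x) := fun x => (hφmeas x).ennreal_toReal
  have hkey : ∀ x : ℝ, (ℙ {ω | x < M ω * B ω}).toReal = ∫ a, G x (M a) := by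
    intro x
    have hmap : Measure.map (fun ω => (M ω, B ω)) ℙ =
        (Measure.map M ℙ).prod (Measure.map B ℙ) :=
      (ProbabilityTheory.indepFun_iff_map_prod_eq_prod_map_map hMmeas.aemeasurable
        hBmeas.aemeasurable).mp hind
    have h1 : ℙ {ω | x < M ω * B ω}
        = Measure.map (fun ω => (M ω, B ω)) ℙ {q : ℝ × ℝ | x < q.1 * q.2} := by
      rw [Measure.map_apply (hMmeas.prodMk hBmeas) (hs x)]
      rfl
    have h2 : ℙ {ω | x < M ω * B ω}
        = ∫⁻ m, Measure.map B ℙ {b | x < m * b} ∂(Measure.map M ℙ) := by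
      rw [h1, hmap, Measure.prod_apply (hs x)]
      rfl
    have h3 : ℙ {ω | x < M ω * B ω}
        = ∫⁻ a, Measure.map B ℙ {b | x < M a * b} ∂ℙ := by
      rw [h2, lintegral_map (hφmeas x) hMmeas]
    rw [h3]
    exact (integral_toReal (((hφmeas x).comp hMmeas).aemeasurable)
      (ae_of_all _ fun a => measure_lt_top _ _)).symm
  -- basic facts about G
  have hG_nn : ∀ x m : ℝ, 0 ≤ G x m := fun _ _ => ENNReal.toReal_nonneg
  have hG_le_one : ∀ x m : ℝ, G x m ≤ 1 := by
    intro x m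
    have h := prob_le_one (μ := Measure.map B ℙ) (s := {b | x < m * b})
    simpa using ENNReal.toReal_mono ENNReal.one_ne_top h
  have hG_eq : ∀ x m : ℝ, 0 < m → G x m = Fb (x / m) := by
    intro x m hm
    have hset : {b : ℝ | x < m * b} = {b : ℝ | x / m < b} := by
      ext b
      simp only [Set.mem_setOf_eq]
      exact (div_lt_iff₀' hm).symm
    have hmp : (Measure.map B ℙ) {b : ℝ | x / m < b} = ℙ {ω | x / m < B ω} := by
      rw [show {b : ℝ | x / m < b} = Set.Ioi (x/m) from rfl,
        Measure.map_apply hBmeas measurableSet_Ioi]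
      rfl
    rw [hGdef]
    simp only
    rw [hset, hmp]
  have hG_le_Fb : ∀ x m : ℝ, 0 ≤ m → m ≤ 1 → G x m ≤ Fb x := by
    intro x m hm0 hm1
    rw [hGdef]
    simp only
    rw [Measure.map_apply hBmeas (hsm x m)]
    apply ENNReal.toReal_mono (measure_ne_top _ _)
    apply measure_mono
    intro ω hω
    simp only [Set.mem_preimage, Set.mem_setOf_eq] at hω ⊢
    nlinarith [hBnn ω]
  -- rewrite the goal as an integral
  have hgoal_eq : ∀ x : ℝ, (ℙ {ω | x < M ω * B ω}).toReal / Fb x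
      = ∫ ω, G x (M ω) / Fb x := by
    intro x
    rw [hkey x]
    exact (integral_div _ _).symm
  refine Tendsto.congr (fun x => (hgoal_eq x).symm) ?_
  -- dominated convergence
  obtain ⟨x2, hx2prop⟩ :=
    eventually_atTop.mp ((hE.and hpos).and (eventually_ge_atTop (max x1 1)))
  set Cbig : ℝ := 2 ^ p + x1 ^ (κ + δ) + 1 with hCbigdef
  have hx1kd : (0:ℝ) ≤ x1 ^ (κ + δ) := Real.rpow_nonneg hx1pos.le _
  have hCbig1 : 1 ≤ Cbig := by
    rw [hCbigdef]
    linarith [hC2pos, hx1kd]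
  apply tendsto_integral_filter_of_dominated_convergence
    (fun ω => Cbig * (1 + M ω ^ (κ + δ)))
  · apply Eventually.of_forall
    intro x
    exact (((hGmeas x).comp hMmeas).div_const _).aestronglyMeasurable
  · filter_upwards [eventually_ge_atTop x2] with x hx
    obtain ⟨⟨hEx, hFbx, _⟩, hxge⟩ := hx2prop x hx
    have hxx1 : x1 ≤ x := le_trans (le_max_left _ _) hxge
    have hxge1 : (1:ℝ) ≤ x := le_trans (le_max_right _ _) hxge
    have hx0 : (0:ℝ) < x := by linarith
    apply ae_of_all
    intro ω
    have hm0 : 0 ≤ M ω := hMnn ω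
    have hmk : 0 ≤ M ω ^ (κ + δ) := Real.rpow_nonneg hm0 _
    have hCbig0 : (0:ℝ) ≤ Cbig := by linarith
    rw [Real.norm_of_nonneg (div_nonneg (hG_nn x (M ω)) (hFb_nn x))]
    rcases le_or_gt (M ω) 1 with hm1 | hm1
    · have h := hG_le_Fb x (M ω) hm0 hm1
      have hone : G x (M ω) / Fb x ≤ 1 := by
        rw [div_le_one hFbx]
        exact h
      refine hone.trans ?_
      rw [hCbigdef]
      exact (breiman_arith hC2pos hx1kd hmk).2.2
    · have hGm : G x (M ω) = Fb (x / M ω) := hG_eq x (M ω) (by linarith)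
      rcases le_or_gt (x1 * M ω) x with hc | hc
      · have hpott := hPotter (M ω) x hm1.le hc
        have hdiv : G x (M ω) / Fb x ≤ (2 * M ω) ^ p := by
          rw [hGm, div_le_iff₀ hFbx]
          exact hpott
        have h2m : (2 * M ω) ^ p = 2 ^ p * M ω ^ p :=
          Real.mul_rpow (by norm_num) hm0
        have hmp : M ω ^ p ≤ M ω ^ (κ + δ) :=
          Real.rpow_le_rpow_of_exponent_le hm1.le (by rw [hpdef]; linarith)
        calc G x (M ω) / Fb x ≤ (2 * M ω) ^ p := hdiv
          _ = 2 ^ p * M ω ^ p := h2m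
          _ ≤ 2 ^ p * M ω ^ (κ + δ) := mul_le_mul_of_nonneg_left hmp hC2pos.le
          _ ≤ Cbig * (1 + M ω ^ (κ + δ)) := by
              rw [hCbigdef]
              exact (breiman_arith hC2pos hx1kd hmk).1
      · have h1 : G x (M ω) / Fb x ≤ 1 / Fb x :=
          div_le_div_of_nonneg_right (hG_le_one x (M ω)) hFbx.le
        have h2 : 1 / Fb x ≤ x ^ (κ + δ) := by
          rw [div_le_iff₀ hFbx]
          linarith [hEx]
        have h3 : x ^ (κ + δ) ≤ (x1 * M ω) ^ (κ + δ) :=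
          Real.rpow_le_rpow hx0.le hc.le (by linarith)
        have h4 : (x1 * M ω) ^ (κ + δ) = x1 ^ (κ + δ) * M ω ^ (κ + δ) :=
          Real.mul_rpow hx1pos.le hm0
        calc G x (M ω) / Fb x ≤ 1 / Fb x := h1
          _ ≤ x ^ (κ + δ) := h2
          _ ≤ (x1 * M ω) ^ (κ + δ) := h3
          _ = x1 ^ (κ + δ) * M ω ^ (κ + δ) := h4
          _ ≤ Cbig * (1 + M ω ^ (κ + δ)) := by
              rw [hCbigdef]
              exact (breiman_arith hC2pos hx1kd hmk).2.1
  · exact (Integrable.add (integrable_const 1) hmom).const_mul Cbig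
  · apply ae_of_all
    intro ω
    rcases eq_or_lt_of_le (hMnn ω) with hm0 | hm0
    · rw [← hm0, Real.zero_rpow hκ.ne']
      apply Tendsto.congr' ?_ tendsto_const_nhds
      filter_upwards [eventually_gt_atTop 0] with x hx
      have hempty : {b : ℝ | x < (0:ℝ) * b} = ∅ := by
        ext b
        simp only [Set.mem_setOf_eq, Set.mem_empty_iff_false, iff_false, not_lt, zero_mul]
        exact hx.le
      rw [hGdef]
      simp only
      rw [hempty]
      simp
    · have ht := hA (M ω)⁻¹ (inv_pos.mpr hm0)
      have hval : ((M ω)⁻¹ : ℝ) ^ (-κ) = M ω ^ κ := by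
        rw [Real.inv_rpow (hMnn ω), Real.rpow_neg (hMnn ω), inv_inv]
      rw [← hval]
      apply Tendsto.congr ?_ ht
      intro x
      rw [hG_eq x (M ω) hm0, inv_mul_eq_div]
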